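/- Let S, S', T be finite multisets of rational numbers with |S| = |S'|. If the Newton polygon of S lies on or below that of S' (i.e., S ≤ S' in the Newton polygon partial order), then the Newton polygon of the multiset sum S ⊕ T lies on or below that of S' ⊕ T, where ⊕ denotes multiset union. -/

import Mathlib

/-- Newton polygon partial order on finite multisets of rationals:
`S ≤ T` iff they have the same cardinality and every partial sum of the
increasing enumeration of `S` is at most the corresponding one of `T`. -/
def npLE (S T : Multiset ℚ) : Prop :=
  Multiset.card S = Multiset.card T ∧
    ∀ i : ℕ, ((S.sort (· ≤ ·)).take i).sum ≤ ((T.sort (· ≤ ·)).take i).sum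

/-- For a sorted list `l`, the sum of the first `|A|` entries is at most the
sum of any sub-multiset `A` of `↑l`. -/
lemma sorted_take_le_sub_sum : ∀ (l : List ℚ), l.Pairwise (· ≤ ·) →
    ∀ A : Multiset ℚ, A ≤ ↑l → (l.take (Multiset.card A)).sum ≤ A.sum := by
  intro l
  induction l with
  | nil =>
    intro _ A hA
    have : A = 0 := Multiset.le_zero.mp (by simpa using hA)
    simp [this]
  | cons x l ih =>
    intro hsort A hA
    rcases eq_or_ne A 0 with rfl | hne
    · simp
    obtain ⟨hx, hl⟩ := List.pairwise_cons.mp hsort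
    by_cases hxA : x ∈ A
    · obtain ⟨A', rfl⟩ := Multiset.exists_cons_of_mem hxA
      have hA' : A' ≤ (l : Multiset ℚ) := by
        have : (x ::ₘ A' : Multiset ℚ) ≤ x ::ₘ (l : Multiset ℚ) := by
          simpa using hA
        exact (Multiset.cons_le_cons_iff x).mp this
      simpa using add_le_add_left (ih hl A' hA') x
    · have hAl : A ≤ (l : Multiset ℚ) := by
        rw [Multiset.le_iff_count]
        intro b
        rcases eq_or_ne b x with rfl | hbx
        · simp [Multiset.count_eq_zero_of_notMem hxA]
        · have := Multiset.le_iff_count.mp hA b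
          simpa [Multiset.count_cons, List.count_cons, hbx, hbx.symm] using this
      obtain ⟨a, ha⟩ := Multiset.exists_mem_of_ne_zero hne
      obtain ⟨A', rfl⟩ := Multiset.exists_cons_of_mem ha
      have haA' : A' ≤ (l : Multiset ℚ) :=
        le_trans (Multiset.le_cons_self A' a) hAl
      have hxa : x ≤ a := hx a (by
        have : a ∈ (l : Multiset ℚ) := Multiset.mem_of_le hAl (Multiset.mem_cons_self a A')
        simpa using this)
      have hih := ih hl A' haA'
      calc (((x :: l).take (Multiset.card (a ::ₘ A'))).sum)
          = x + (l.take (Multiset.card A')).sum := by simp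
        _ ≤ a + A'.sum := add_le_add hxa hih
        _ = (a ::ₘ A').sum := by simp

/-- The first `j` entries of the sort of `S` form a sub-multiset of `S`. -/
lemma take_sort_le (S : Multiset ℚ) (j : ℕ) :
    (↑((S.sort (· ≤ ·)).take j) : Multiset ℚ) ≤ S := by
  have h : (↑((S.sort (· ≤ ·)).take j) : Multiset ℚ) ≤ ↑(S.sort (· ≤ ·)) :=
    (List.take_sublist j _).subperm
  simpa [Multiset.sort_eq] using h

theorem newton_add_right_mono (S S' T : Multiset ℚ) (h : npLE S S') :
    npLE (S + T) (S' + T) := by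
  obtain ⟨hcard, hsum⟩ := h
  refine ⟨by simp [hcard], fun i => ?_⟩
  have hlenS : (S.sort (· ≤ ·)).length = Multiset.card S := Multiset.length_sort _
  have hlenT : (T.sort (· ≤ ·)).length = Multiset.card T := Multiset.length_sort _
  by_cases hi : i ≤ Multiset.card (S' + T)
  · -- the i smallest elements of S' + T
    set C : Multiset ℚ := (↑(((S' + T).sort (· ≤ ·)).take i) : Multiset ℚ) with hC
    have hCle : C ≤ S' + T := take_sort_le _ i
    have hCcard : Multiset.card C = i := by
      simp only [hC, Multiset.coe_card, List.length_take, Multiset.length_sort]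
      exact min_eq_left hi
    set A : Multiset ℚ := C - T with hAdef
    set B : Multiset ℚ := C - A with hBdef
    have hA : A ≤ S' := Multiset.sub_le_iff_le_add.mpr hCle
    have hB : B ≤ T := tsub_tsub_le
    have hAC : A ≤ C := tsub_le_self
    have hABC : A + B = C := add_tsub_cancel_of_le hAC
    set j := Multiset.card A with hj
    set k := Multiset.card B with hk
    have hjk : j + k = i := by
      rw [hj, hk, ← Multiset.card_add, hABC, hCcard]
    have hjS : j ≤ Multiset.card S := by
      rw [hcard]; exact Multiset.card_le_card hA
    have hkT : k ≤ Multiset.card T := Multiset.card_le_card hB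
    -- D, E : the j smallest of S and k smallest of T
    set D : Multiset ℚ := (↑((S.sort (· ≤ ·)).take j) : Multiset ℚ) with hD
    set E : Multiset ℚ := (↑((T.sort (· ≤ ·)).take k) : Multiset ℚ) with hE
    have hDcard : Multiset.card D = j := by
      simp only [hD, Multiset.coe_card, List.length_take, hlenS]
      exact min_eq_left hjS
    have hEcard : Multiset.card E = k := by
      simp only [hE, Multiset.coe_card, List.length_take, hlenT]
      exact min_eq_left hkT
    have hDE : D + E ≤ S + T := add_le_add (take_sort_le S j) (take_sort_le T k)
    have h1 : (((S + T).sort (· ≤ ·)).take i).sum ≤ (D + E).sum := by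
      have := sorted_take_le_sub_sum ((S + T).sort (· ≤ ·))
        (Multiset.pairwise_sort _ _) (D + E) (by rwa [Multiset.sort_eq])
      rwa [Multiset.card_add, hDcard, hEcard, hjk] at this
    have h2 : D.sum ≤ A.sum := by
      have hstep : (((S'.sort (· ≤ ·)).take j).sum) ≤ A.sum := by
        have := sorted_take_le_sub_sum (S'.sort (· ≤ ·))
          (Multiset.pairwise_sort _ _) A (by rwa [Multiset.sort_eq])
        simpa using this
      calc D.sum = ((S.sort (· ≤ ·)).take j).sum := by simp [hD]
        _ ≤ ((S'.sort (· ≤ ·)).take j).sum := hsum j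
        _ ≤ A.sum := hstep
    have h3 : E.sum ≤ B.sum := by
      have := sorted_take_le_sub_sum (T.sort (· ≤ ·))
        (Multiset.pairwise_sort _ _) B (by rwa [Multiset.sort_eq])
      simpa [hE] using this
    have hCsum : (((S' + T).sort (· ≤ ·)).take i).sum = A.sum + B.sum := by
      have : C.sum = A.sum + B.sum := by rw [← hABC, Multiset.sum_add]
      simpa [hC] using this
    rw [hCsum]
    calc (((S + T).sort (· ≤ ·)).take i).sum ≤ (D + E).sum := h1
      _ = D.sum + E.sum := by rw [Multiset.sum_add]
      _ ≤ A.sum + B.sum := add_le_add h2 h3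
  · -- i exceeds both cardinalities: both sides are the full sums
    push_neg at hi
    have hlen1 : ((S + T).sort (· ≤ ·)).length ≤ i := by
      rw [Multiset.length_sort, Multiset.card_add, hcard, ← Multiset.card_add]
      exact le_of_lt hi
    have hlen2 : ((S' + T).sort (· ≤ ·)).length ≤ i := by
      rw [Multiset.length_sort]; exact le_of_lt hi
    rw [List.take_of_length_le hlen1, List.take_of_length_le hlen2]
    have e1 : ((S + T).sort (· ≤ ·)).sum = S.sum + T.sum := by
      rw [← Multiset.sum_coe, Multiset.sort_eq, Multiset.sum_add]
    have e2 : ((S' + T).sort (· ≤ ·)).sum = S'.sum + T.sum := by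
      rw [← Multiset.sum_coe, Multiset.sort_eq, Multiset.sum_add]
    rw [e1, e2]
    have hS : S.sum ≤ S'.sum := by
      have := hsum (Multiset.card S)
      rwa [List.take_of_length_le (by rw [hlenS]),
        List.take_of_length_le (by rw [Multiset.length_sort, hcard]),
        ← Multiset.sum_coe, Multiset.sort_eq, ← Multiset.sum_coe, Multiset.sort_eq] at this
    exact add_le_add_left hS T.sum
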